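/- Let G be a finitely generated group with word metric and let n ≥ 1. Suppose φ_i : C_i(G) → C_i(G), 0 ≤ i ≤ n, are ℤG-module homomorphisms with dφ_i = φ_{i-1}d for 0 ≤ i ≤ n, each bounded from the Sobolev norm to the ℓ¹-norm, and φ induces the identity on 0-th homology of the standard resolution. Then there exist ℤG-module homomorphisms h_i : C_i(G) → C_{i+1}(G), 0 ≤ i ≤ n, bounded from the Sobolev norm to the ℓ¹-norm, satisfying d h_i + h_{i-1} d = φ_i − id for 0 ≤ i ≤ n (with h_{-1}d = 0). -/

import Mathlib

set_option linter.unusedSectionVars false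
set_option maxHeartbeats 1000000


open scoped BigOperators

/-- The simplicial differential on the standard homogeneous resolution. -/
noncomputable def del (G : Type*) (n : ℕ) :
    ((Fin (n + 2) → G) →₀ ℤ) →+ ((Fin (n + 1) → G) →₀ ℤ) :=
  Finsupp.liftAddHom fun σ =>
    zmultiplesHom _ (∑ i : Fin (n + 2), (-1 : ℤ) ^ (i : ℕ) •
      Finsupp.single (fun j => σ (i.succAbove j)) (1 : ℤ))

/-- The ℓ¹-norm of an integral chain. -/
noncomputable def l1 {α : Type*} (x : α →₀ ℤ) : ℝ :=
  ∑ a ∈ x.support, |(x a : ℝ)|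

/-- The word metric on `G` associated to a generating set `S`. -/
noncomputable def wordDist {G : Type*} [Group G] (S : Set G) (x y : G) : ℕ :=
  sInf {n | ∃ l : List G, (∀ g ∈ l, g ∈ S ∨ g⁻¹ ∈ S) ∧ l.length = n ∧ x * l.prod = y}

/-- The diameter of a tuple in the word metric. -/
noncomputable def diamS {G : Type*} [Group G] (S : Set G) {n : ℕ} (σ : Fin n → G) : ℕ :=
  Finset.univ.sup fun p : Fin n × Fin n => wordDist S (σ p.1) (σ p.2)

/-- The Sobolev norm on chains. -/
noncomputable def sob {G : Type*} [Group G] (S : Set G) {n : ℕ}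
    (x : (Fin n → G) →₀ ℤ) : ℝ :=
  ∑ σ ∈ x.support, |(x σ : ℝ)| * (1 + (diamS S σ : ℝ))

/-- The diagonal `G`-action on the standard resolution. -/
noncomputable def gAct {G : Type*} [Group G] (g : G) {n : ℕ} :
    ((Fin n → G) →₀ ℤ) → ((Fin n → G) →₀ ℤ) :=
  Finsupp.mapDomain fun σ => fun j => g * σ j

/-- The augmentation `ε : C₀(G) → ℤ`. -/
noncomputable def aug (G : Type*) (x : (Fin 1 → G) →₀ ℤ) : ℤ :=
  x.sum fun _ a => a

namespace BBH

lemma addHom_ext_one {α : Type*} {M : Type*} [AddCommGroup M]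
    {f g : (α →₀ ℤ) →+ M} (h : ∀ σ, f (Finsupp.single σ 1) = g (Finsupp.single σ 1)) :
    f = g := by
  refine Finsupp.addHom_ext fun σ a => ?_
  have hs : Finsupp.single σ a = a • Finsupp.single σ (1 : ℤ) := by
    simp [Finsupp.smul_single]
  rw [hs, map_zsmul, map_zsmul, h]

lemma del_single {G : Type*} (n : ℕ) (σ : Fin (n + 2) → G) :
    del G n (Finsupp.single σ 1) =
      ∑ i : Fin (n + 2), (-1 : ℤ) ^ (i : ℕ) •
        Finsupp.single (fun j => σ (i.succAbove j)) (1 : ℤ) := by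
  simp [del, Finsupp.liftAddHom_apply_single]

section Group
variable {G : Type*} [Group G]

/-- `gAct` as an `AddMonoidHom`. -/
noncomputable def gA (g : G) (n : ℕ) : ((Fin n → G) →₀ ℤ) →+ ((Fin n → G) →₀ ℤ) :=
  Finsupp.mapDomain.addMonoidHom fun σ => fun j => g * σ j

lemma gAct_eq (g : G) {n : ℕ} (x : (Fin n → G) →₀ ℤ) : gAct g x = gA g n x := rfl

lemma gAct_single (g : G) {n : ℕ} (σ : Fin n → G) (a : ℤ) :
    gAct g (Finsupp.single σ a) = Finsupp.single (fun j => g * σ j) a :=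
  Finsupp.mapDomain_single

lemma gAct_gAct (g g' : G) {n : ℕ} (x : (Fin n → G) →₀ ℤ) :
    gAct g (gAct g' x) = gAct (g * g') x := by
  simp only [gAct, ← Finsupp.mapDomain_comp]
  congr 1
  funext σ j
  simp [Function.comp, mul_assoc]

lemma del_gAct (g : G) (n : ℕ) (x : (Fin (n + 2) → G) →₀ ℤ) :
    del G n (gAct g x) = gAct g (del G n x) := by
  have : (del G n).comp (gA g (n + 2)) = (gA g (n + 1)).comp (del G n) := by
    refine addHom_ext_one fun σ => ?_
    show del G n (gAct g (Finsupp.single σ 1)) = gAct g (del G n (Finsupp.single σ 1))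
    rw [gAct_single, del_single, del_single, gAct_eq, map_sum]
    refine Finset.sum_congr rfl fun i _ => ?_
    rw [map_zsmul]
    congr 1
    exact (gAct_single g (fun j => σ (i.succAbove j)) 1).symm
  simpa [gAct_eq] using DFunLike.congr_fun this x

end Group

end BBH

namespace BBH
section Group
variable {G : Type*} [Group G]

/-- The cone map `C_k → C_{k+1}`, `σ ↦ (e, σ)`. -/
noncomputable def cone (k : ℕ) : ((Fin (k + 1) → G) →₀ ℤ) →+ ((Fin (k + 2) → G) →₀ ℤ) :=
  Finsupp.mapDomain.addMonoidHom fun σ => (Fin.cons 1 σ : Fin (k + 2) → G)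

lemma cone_single {k : ℕ} (σ : Fin (k + 1) → G) (a : ℤ) :
    cone k (Finsupp.single σ a) = Finsupp.single (Fin.cons 1 σ : Fin (k + 2) → G) a :=
  Finsupp.mapDomain_single

lemma del_cone_succ {k : ℕ} (x : (Fin (k + 2) → G) →₀ ℤ) :
    del G (k + 1) (cone (k + 1) x) = x - cone k (del G k x) := by
  have : (del G (k + 1)).comp (cone (k + 1)) =
      AddMonoidHom.id _ - (cone k).comp (del G k) := by
    refine addHom_ext_one fun σ => ?_
    simp only [AddMonoidHom.comp_apply, AddMonoidHom.sub_apply, AddMonoidHom.id_apply]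
    rw [cone_single, del_single, del_single, map_sum]
    simp only [map_zsmul]
    rw [Fin.sum_univ_succ]
    have h0 : (fun j => (Fin.cons (1 : G) σ : Fin (k + 3) → G) ((0 : Fin (k+3)).succAbove j)) = σ := by
      funext j
      rw [Fin.zero_succAbove, Fin.cons_succ]
    have hsucc : ∀ i : Fin (k + 2),
        (fun j => (Fin.cons (1 : G) σ : Fin (k + 3) → G) ((i.succ).succAbove j)) =
          (Fin.cons (1 : G) (fun j => σ (i.succAbove j)) : Fin (k + 2) → G) := by
      intro i
      funext j
      refine Fin.cases ?_ (fun m => ?_) j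
      · rw [Fin.succ_succAbove_zero, Fin.cons_zero, Fin.cons_zero]
      · rw [Fin.succ_succAbove_succ, Fin.cons_succ, Fin.cons_succ]
    rw [h0]
    simp only [Fin.val_zero, pow_zero, one_smul, Fin.val_succ, hsucc]
    have : ∀ i : Fin (k + 2),
        (-1 : ℤ) ^ ((i : ℕ) + 1) • Finsupp.single (Fin.cons (1 : G)
          (fun j => σ (i.succAbove j)) : Fin (k + 2) → G) (1 : ℤ) =
        -((-1 : ℤ) ^ (i : ℕ) • cone k (Finsupp.single (fun j => σ (i.succAbove j)) (1 : ℤ))) := by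
      intro i
      rw [cone_single, pow_succ, mul_smul, neg_one_zsmul, smul_neg]
    rw [Finset.sum_congr rfl fun i _ => this i, Finset.sum_neg_distrib, ← sub_eq_add_neg]
  simpa using DFunLike.congr_fun this x

lemma aug_single (σ : Fin 1 → G) (a : ℤ) : aug G (Finsupp.single σ a) = a := by
  simp [aug, Finsupp.sum_single_index]

/-- Augmentation as an `AddMonoidHom`. -/
noncomputable def augH : ((Fin 1 → G) →₀ ℤ) →+ ℤ :=
  Finsupp.liftAddHom fun _ => AddMonoidHom.id ℤ

lemma aug_eq (x : (Fin 1 → G) →₀ ℤ) : aug G x = augH x := by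
  rw [augH, Finsupp.liftAddHom_apply]; rfl

lemma del_cone_zero (x : (Fin 1 → G) →₀ ℤ) :
    del G 0 (cone 0 x) = x - aug G x • Finsupp.single (fun _ => (1 : G)) 1 := by
  rw [aug_eq]
  have : (del G 0).comp (cone 0) = AddMonoidHom.id _ -
      ((zmultiplesHom _ (Finsupp.single (fun _ => (1 : G)) (1 : ℤ))).comp augH) := by
    refine addHom_ext_one fun σ => ?_
    simp only [AddMonoidHom.comp_apply, AddMonoidHom.sub_apply, AddMonoidHom.id_apply]
    rw [cone_single, del_single, Fin.sum_univ_two]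
    have h0 : (fun j => (Fin.cons (1 : G) σ : Fin 2 → G) ((0 : Fin 2).succAbove j)) = σ := by
      funext j
      rw [Fin.zero_succAbove, Fin.cons_succ]
    have h1 : (fun j => (Fin.cons (1 : G) σ : Fin 2 → G) ((1 : Fin 2).succAbove j)) =
        fun _ : Fin 1 => (1 : G) := by
      funext j
      have hj : j = 0 := Subsingleton.elim _ _
      subst hj
      have : (1 : Fin 2).succAbove 0 = 0 := by decide
      rw [this, Fin.cons_zero]
    rw [h0, h1, ← aug_eq, aug_single]
    simp [sub_eq_add_neg]
  simpa [← aug_eq] using DFunLike.congr_fun this x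

end Group
end BBH

namespace BBH
lemma key_succAbove {m : ℕ} {i j : Fin (m + 2)} (H : i ≤ j) (k : Fin (m + 1)) :
    j.succ.succAbove (i.succAbove k) = i.castSucc.succAbove (j.succAbove k) := by
  rcases i with ⟨i,hi⟩; rcases j with ⟨j,hj⟩; rcases k with ⟨k,hk⟩
  simp only [Fin.le_def] at H
  apply Fin.ext
  simp [Fin.succAbove, Fin.lt_def]
  split_ifs <;> simp_all <;> omega

lemma del_del_single {G : Type*} (m : ℕ) (σ : Fin (m + 3) → G) :
    del G m (del G (m + 1) (Finsupp.single σ 1)) = 0 := by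
  rw [del_single, map_sum]
  simp_rw [map_zsmul, del_single, Finset.smul_sum, smul_smul, ← pow_add]
  rw [← Finset.sum_product']
  set f : Fin (m + 3) × Fin (m + 2) → ((Fin (m + 1) → G) →₀ ℤ) :=
    fun p => (-1 : ℤ) ^ ((p.1 : ℕ) + (p.2 : ℕ)) •
      Finsupp.single (fun j => σ (p.1.succAbove (p.2.succAbove j))) (1 : ℤ) with hf
  show ∑ p ∈ Finset.univ ×ˢ Finset.univ, f p = 0
  classical
  refine Finset.sum_ninvolution
    (fun p => if h : p.2.castSucc < p.1
      then (p.2.castSucc, p.1.pred (Fin.pos_iff_ne_zero.mp (lt_of_le_of_lt (Fin.zero_le _) h)))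
      else (p.2.succ, p.1.castPred (by
        intro hl
        have := not_lt.mp h
        rw [hl] at this
        exact absurd (lt_of_le_of_lt this (Fin.castSucc_lt_last _)) (lt_irrefl _))))
    (fun p => ?_) (fun p hfp => ?_) (fun p => Finset.mk_mem_product (Finset.mem_univ _)
      (Finset.mem_univ _)) (fun p => ?_)
  · -- f p + f (g p) = 0
    obtain ⟨a, b⟩ := p
    by_cases h : b.castSucc < a
    · simp only [h, dif_pos]
      have ha : a ≠ 0 := Fin.pos_iff_ne_zero.mp (lt_of_le_of_lt (Fin.zero_le _) h)
      have hle : b ≤ a.pred ha := by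
        rw [Fin.le_def, Fin.coe_pred]
        rw [Fin.lt_def, Fin.coe_castSucc] at h
        omega
      have hkey : ∀ k, a.succAbove (b.succAbove k)
          = b.castSucc.succAbove ((a.pred ha).succAbove k) := by
        intro k
        have := key_succAbove hle k
        rwa [Fin.succ_pred] at this
      have hfun : (fun j => σ (a.succAbove (b.succAbove j)))
          = fun j => σ (b.castSucc.succAbove ((a.pred ha).succAbove j)) := by
        funext j; rw [hkey]
      have hsign : ((a : ℕ) + b) = ((b.castSucc : ℕ) + (a.pred ha : ℕ)) + 1 := by
        rw [Fin.coe_castSucc, Fin.coe_pred]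
        have : 0 < (a : ℕ) := lt_of_le_of_lt (Nat.zero_le _) h
        omega
      simp only [hf, hfun, hsign, pow_succ]
      rw [← add_smul]; ring_nf; simp
    · simp only [h, dif_neg, not_false_iff]
      have hle2 : a ≤ b.castSucc := not_lt.mp h
      have hnl : a ≠ Fin.last _ := by
        intro hl; rw [hl] at hle2
        exact absurd (lt_of_le_of_lt hle2 (Fin.castSucc_lt_last _)) (lt_irrefl _)
      have hle : a.castPred hnl ≤ b := by
        rw [Fin.le_def, Fin.coe_castPred]
        rw [Fin.le_def, Fin.coe_castSucc] at hle2
        omega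
      have hkey : ∀ k, b.succ.succAbove ((a.castPred hnl).succAbove k)
          = a.succAbove (b.succAbove k) := by
        intro k
        have := key_succAbove hle k
        rwa [Fin.castSucc_castPred] at this
      have hfun : (fun j => σ (b.succ.succAbove ((a.castPred hnl).succAbove j)))
          = fun j => σ (a.succAbove (b.succAbove j)) := by
        funext j; rw [hkey]
      have hsign : ((b.succ : ℕ) + (a.castPred hnl : ℕ)) = ((a : ℕ) + b) + 1 := by
        rw [Fin.val_succ, Fin.coe_castPred]; omega
      simp only [hf, hfun, hsign, pow_succ]
      rw [← add_smul]; ring_nf; simp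
  · -- g p ≠ p
    obtain ⟨a, b⟩ := p
    by_cases h : b.castSucc < a
    · simp only [h, dif_pos]
      intro heq
      have := congrArg Prod.fst heq
      simp only at this
      rw [this] at h; exact lt_irrefl _ h
    · simp only [h, dif_neg, not_false_iff]
      intro heq
      have := congrArg Prod.fst heq
      simp only at this
      apply h
      rw [← this, Fin.castSucc_lt_succ_iff]
  · -- involutive
    obtain ⟨a, b⟩ := p
    by_cases h : b.castSucc < a
    · simp only [h, dif_pos]
      have ha : a ≠ 0 := Fin.pos_iff_ne_zero.mp (lt_of_le_of_lt (Fin.zero_le _) h)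
      have hcond : ¬ ((a.pred ha).castSucc < b.castSucc) := by
        rw [not_lt, Fin.le_def, Fin.coe_castSucc, Fin.coe_castSucc, Fin.coe_pred]
        rw [Fin.lt_def, Fin.coe_castSucc] at h
        omega
      simp only [hcond, dif_neg, not_false_iff]
      ext
      · simp [Fin.succ_pred]
      · simp [Fin.castPred_castSucc]
    · simp only [h, dif_neg, not_false_iff]
      have hnl : a ≠ Fin.last _ := by
        intro hl
        exact h (hl ▸ Fin.castSucc_lt_last b)
      have hcond : (a.castPred hnl).castSucc < b.succ := by
        rw [Fin.lt_def, Fin.coe_castSucc, Fin.coe_castPred, Fin.val_succ]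
        rw [not_lt, Fin.le_def, Fin.coe_castSucc] at h
        omega
      simp only [hcond, dif_pos]
      ext
      · simp [Fin.castSucc_castPred]
      · simp [Fin.pred_succ]

lemma del_del {G : Type*} (m : ℕ) (x : (Fin (m + 3) → G) →₀ ℤ) :
    del G m (del G (m + 1) x) = 0 := by
  have : (del G m).comp (del G (m + 1)) = 0 := by
    refine addHom_ext_one fun σ => ?_
    simpa using del_del_single m σ
  simpa using DFunLike.congr_fun this x
end BBH

namespace BBH

section Norms
variable {α β : Type*}

lemma l1_zero : l1 (0 : α →₀ ℤ) = 0 := by simp [l1]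

lemma l1_nonneg (x : α →₀ ℤ) : 0 ≤ l1 x :=
  Finset.sum_nonneg fun _ _ => abs_nonneg _

lemma l1_eq_sum_subset {x : α →₀ ℤ} {s : Finset α} (h : x.support ⊆ s) :
    l1 x = ∑ a ∈ s, |(x a : ℝ)| := by
  refine Finset.sum_subset h fun a _ ha => ?_
  simp [Finsupp.notMem_support_iff.mp ha]

lemma l1_add_le (x y : α →₀ ℤ) : l1 (x + y) ≤ l1 x + l1 y := by
  classical
  rw [l1_eq_sum_subset (Finsupp.support_add (g₁ := x) (g₂ := y)),
    l1_eq_sum_subset (Finset.subset_union_left (s₂ := y.support)),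
    l1_eq_sum_subset (Finset.subset_union_right (s₁ := x.support)),
    ← Finset.sum_add_distrib]
  refine Finset.sum_le_sum fun a _ => ?_
  rw [Finsupp.add_apply]
  push_cast
  exact abs_add_le _ _

lemma l1_neg (x : α →₀ ℤ) : l1 (-x) = l1 x := by
  simp [l1, Finsupp.support_neg]

lemma l1_sub_le (x y : α →₀ ℤ) : l1 (x - y) ≤ l1 x + l1 y := by
  rw [sub_eq_add_neg]
  exact (l1_add_le x (-y)).trans (by rw [l1_neg])

lemma l1_zsmul_le (a : ℤ) (x : α →₀ ℤ) : l1 (a • x) ≤ |(a : ℝ)| * l1 x := by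
  classical
  rw [l1_eq_sum_subset (Finsupp.support_smul (b := a) (g := x)), l1, Finset.mul_sum]
  refine Finset.sum_le_sum fun b _ => ?_
  rw [Finsupp.smul_apply, smul_eq_mul]
  push_cast
  rw [abs_mul]

lemma l1_single_le (σ : α) (a : ℤ) : l1 (Finsupp.single σ a) ≤ |(a : ℝ)| := by
  classical
  rcases eq_or_ne a 0 with rfl | ha
  · simp [l1_zero]
  · rw [l1, Finsupp.support_single_ne_zero _ ha]
    simp

lemma l1_finsetSum_le {s : Finset β} (f : β → (α →₀ ℤ)) :
    l1 (∑ i ∈ s, f i) ≤ ∑ i ∈ s, l1 (f i) := by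
  classical
  induction s using Finset.cons_induction with
  | empty => simp [l1_zero]
  | cons b s hb ih =>
    rw [Finset.sum_cons, Finset.sum_cons]
    exact (l1_add_le _ _).trans (by gcongr)

lemma l1_mapDomain {f : α → β} (hf : Function.Injective f) (x : α →₀ ℤ) :
    l1 (Finsupp.mapDomain f x) = l1 x := by
  classical
  have h := Finsupp.embDomain_eq_mapDomain ⟨f, hf⟩ x
  rw [Function.Embedding.coeFn_mk] at h
  rw [← h]
  unfold l1
  rw [Finsupp.support_embDomain, Finset.sum_map]
  refine Finset.sum_congr rfl fun a _ => ?_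
  rw [Finsupp.embDomain_apply_self]

end Norms

section SobNorms
variable {G : Type*} [Group G] {S : Set G}

lemma sob_nonneg {k : ℕ} (x : (Fin k → G) →₀ ℤ) : 0 ≤ sob S x :=
  Finset.sum_nonneg fun _ _ => mul_nonneg (abs_nonneg _) (by positivity)

lemma sob_eq_sum_subset {k : ℕ} {x : (Fin k → G) →₀ ℤ} {s : Finset (Fin k → G)}
    (h : x.support ⊆ s) :
    sob S x = ∑ a ∈ s, |(x a : ℝ)| * (1 + (diamS S a : ℝ)) := by
  refine Finset.sum_subset h fun a _ ha => ?_
  simp [Finsupp.notMem_support_iff.mp ha]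

lemma sob_add_le {k : ℕ} (x y : (Fin k → G) →₀ ℤ) :
    sob S (x + y) ≤ sob S x + sob S y := by
  classical
  rw [sob_eq_sum_subset (Finsupp.support_add (g₁ := x) (g₂ := y)),
    sob_eq_sum_subset (Finset.subset_union_left (s₂ := y.support)),
    sob_eq_sum_subset (Finset.subset_union_right (s₁ := x.support)),
    ← Finset.sum_add_distrib]
  refine Finset.sum_le_sum fun a _ => ?_
  rw [Finsupp.add_apply, ← add_mul]
  have := abs_add_le ((x a : ℝ)) ((y a : ℝ))
  push_cast
  have h1 : (0 : ℝ) ≤ 1 + (diamS S a : ℝ) := by positivity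
  nlinarith [abs_add_le ((x a : ℝ)) ((y a : ℝ))]

lemma sob_zsmul_le {k : ℕ} (a : ℤ) (x : (Fin k → G) →₀ ℤ) :
    sob S (a • x) ≤ |(a : ℝ)| * sob S x := by
  classical
  rw [sob_eq_sum_subset (Finsupp.support_smul (b := a) (g := x)), sob, Finset.mul_sum]
  refine Finset.sum_le_sum fun b _ => ?_
  rw [Finsupp.smul_apply, smul_eq_mul]
  push_cast
  rw [abs_mul, mul_assoc]

lemma sob_single_le {k : ℕ} (σ : Fin k → G) (a : ℤ) :
    sob S (Finsupp.single σ a) ≤ |(a : ℝ)| * (1 + (diamS S σ : ℝ)) := by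
  classical
  rcases eq_or_ne a 0 with rfl | ha
  · simp only [Finsupp.single_zero]
    rw [show sob S (0 : (Fin k → G) →₀ ℤ) = 0 by simp [sob]]
    positivity
  · rw [sob, Finsupp.support_single_ne_zero _ ha]
    simp

lemma sob_single_eq {k : ℕ} (σ : Fin k → G) :
    sob S (Finsupp.single σ (1 : ℤ)) = 1 + (diamS S σ : ℝ) := by
  classical
  rw [sob, Finsupp.support_single_ne_zero _ one_ne_zero]
  simp

lemma sob_finsetSum_le {β : Type*} {k : ℕ} {s : Finset β} (f : β → ((Fin k → G) →₀ ℤ)) :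
    sob S (∑ i ∈ s, f i) ≤ ∑ i ∈ s, sob S (f i) := by
  classical
  induction s using Finset.cons_induction with
  | empty => simp [sob]
  | cons b s hb ih =>
    rw [Finset.sum_cons, Finset.sum_cons]
    exact (sob_add_le _ _).trans (by gcongr)

lemma l1_le_sob {k : ℕ} (x : (Fin k → G) →₀ ℤ) : l1 x ≤ sob S x := by
  refine Finset.sum_le_sum fun a _ => ?_
  have h1 : (0 : ℝ) ≤ (diamS S a : ℝ) := by positivity
  nlinarith [abs_nonneg ((x a : ℝ))]

-- word metric invariance
lemma wordDist_mul_left (S : Set G) (g x y : G) :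
    wordDist S (g * x) (g * y) = wordDist S x y := by
  unfold wordDist
  congr 1
  ext m
  constructor
  · rintro ⟨l, h1, h2, h3⟩
    exact ⟨l, h1, h2, by rwa [mul_assoc, mul_right_inj] at h3⟩
  · rintro ⟨l, h1, h2, h3⟩
    exact ⟨l, h1, h2, by rw [mul_assoc, h3]⟩

lemma diamS_smul (g : G) {k : ℕ} (σ : Fin k → G) :
    diamS S (fun j => g * σ j) = diamS S σ := by
  unfold diamS
  congr 1
  funext p
  exact wordDist_mul_left S g _ _

lemma diamS_comp_le {k m : ℕ} (σ : Fin k → G) (f : Fin m → Fin k) :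
    diamS S (fun j => σ (f j)) ≤ diamS S σ := by
  refine Finset.sup_le fun p _ => ?_
  exact Finset.le_sup (f := fun p : Fin k × Fin k => wordDist S (σ p.1) (σ p.2))
    (Finset.mem_univ (f p.1, f p.2))

lemma sob_del_single_le {k : ℕ} (τ : Fin (k + 2) → G) :
    sob S (del G k (Finsupp.single τ 1)) ≤ (k + 2) * (1 + (diamS S τ : ℝ)) := by
  rw [del_single]
  refine (sob_finsetSum_le _).trans ?_
  have hterm : ∀ i : Fin (k + 2),
      sob S ((-1 : ℤ) ^ (i : ℕ) • Finsupp.single (fun j => τ (i.succAbove j)) (1 : ℤ))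
        ≤ 1 + (diamS S τ : ℝ) := by
    intro i
    refine (sob_zsmul_le _ _).trans ?_
    have h1 : |(((-1 : ℤ) ^ (i : ℕ) : ℤ) : ℝ)| = 1 := by
      push_cast
      rw [abs_pow, abs_neg, abs_one, one_pow]
    rw [h1, one_mul, sob_single_eq]
    have := diamS_comp_le (S := S) τ (fun j => i.succAbove j)
    have h2 : (diamS S (fun j => τ (i.succAbove j)) : ℝ) ≤ (diamS S τ : ℝ) := by
      exact_mod_cast this
    linarith
  refine (Finset.sum_le_sum fun i _ => hterm i).trans (le_of_eq ?_)
  rw [Finset.sum_const, Finset.card_univ, Fintype.card_fin, nsmul_eq_mul]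
  push_cast
  ring

end SobNorms
end BBH

namespace BBH
section Group
variable {G : Type*} [Group G]

/-- Equivariant extension of a map given on canonical representatives. -/
noncomputable def extH {i : ℕ} (f : (Fin (i + 1) → G) → ((Fin (i + 2) → G) →₀ ℤ)) :
    ((Fin (i + 1) → G) →₀ ℤ) →+ ((Fin (i + 2) → G) →₀ ℤ) :=
  Finsupp.liftAddHom fun σ =>
    zmultiplesHom _ (gAct (σ 0) (f (fun j => (σ 0)⁻¹ * σ j)))

lemma extH_single {i : ℕ} (f : (Fin (i + 1) → G) → ((Fin (i + 2) → G) →₀ ℤ))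
    (σ : Fin (i + 1) → G) :
    extH f (Finsupp.single σ 1) = gAct (σ 0) (f (fun j => (σ 0)⁻¹ * σ j)) := by
  simp [extH, Finsupp.liftAddHom_apply_single]

lemma extH_equiv {i : ℕ} (f : (Fin (i + 1) → G) → ((Fin (i + 2) → G) →₀ ℤ))
    (g : G) (x : (Fin (i + 1) → G) →₀ ℤ) :
    extH f (gAct g x) = gAct g (extH f x) := by
  have : (extH f).comp (gA g (i + 1)) = (gA g (i + 2)).comp (extH f) := by
    refine addHom_ext_one fun σ => ?_
    show extH f (gAct g (Finsupp.single σ 1)) = gAct g (extH f (Finsupp.single σ 1))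
    rw [gAct_single, extH_single, extH_single, gAct_gAct]
    have hc : (fun j => ((fun j' => g * σ j') 0)⁻¹ * ((fun j' => g * σ j') j))
        = fun j => (σ 0)⁻¹ * σ j := by
      funext j
      simp [mul_inv_rev, mul_assoc]
    show gAct ((fun j => g * σ j) 0) (f (fun j => ((fun j' => g * σ j') 0)⁻¹ * (g * σ j)))
      = gAct (g * σ 0) (f fun j => (σ 0)⁻¹ * σ j)
    rw [show (fun j => ((fun j' => g * σ j') 0)⁻¹ * (g * σ j)) = fun j => (σ 0)⁻¹ * σ j from hc]
  simpa [gAct_eq] using DFunLike.congr_fun this x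

lemma single_canon {k : ℕ} (σ : Fin (k + 1) → G) :
    gAct (σ 0) (Finsupp.single (fun j => (σ 0)⁻¹ * σ j) (1 : ℤ)) = Finsupp.single σ 1 := by
  rw [gAct_single]
  congr 1
  funext j
  exact mul_inv_cancel_left _ _

lemma l1_gAct (g : G) {k : ℕ} (x : (Fin k → G) →₀ ℤ) : l1 (gAct g x) = l1 x := by
  refine l1_mapDomain (fun σ τ h => ?_) x
  funext j
  exact mul_left_cancel (congrFun h j)

lemma l1_cone {k : ℕ} (x : (Fin (k + 1) → G) →₀ ℤ) : l1 (cone k x) = l1 x := by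
  refine l1_mapDomain (fun σ τ h => ?_) x
  funext j
  have := congrFun h j.succ
  simpa [Fin.cons_succ] using this

lemma l1_bound_of_single {S : Set G} {k : ℕ} {β : Type*}
    (H : ((Fin k → G) →₀ ℤ) →+ (β →₀ ℤ)) {c : ℝ}
    (hb : ∀ σ : Fin k → G, l1 (H (Finsupp.single σ 1)) ≤ c * (1 + (diamS S σ : ℝ)))
    (x : (Fin k → G) →₀ ℤ) : l1 (H x) ≤ c * sob S x := by
  classical
  have h1 : H x = ∑ σ ∈ x.support, (x σ) • H (Finsupp.single σ 1) := by
    conv_lhs => rw [← Finsupp.sum_single x]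
    rw [Finsupp.sum, map_sum]
    refine Finset.sum_congr rfl fun σ _ => ?_
    rw [← map_zsmul]
    congr 1
    simp [Finsupp.smul_single]
  rw [h1]
  refine (l1_finsetSum_le _).trans ?_
  have h2 : sob S x = ∑ σ ∈ x.support, |(x σ : ℝ)| * (1 + (diamS S σ : ℝ)) := rfl
  rw [h2, Finset.mul_sum]
  refine Finset.sum_le_sum fun σ hσ => ?_
  refine (l1_zsmul_le _ _).trans ?_
  calc |((x σ : ℤ) : ℝ)| * l1 (H (Finsupp.single σ 1))
      ≤ |((x σ : ℤ) : ℝ)| * (c * (1 + (diamS S σ : ℝ))) :=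
        mul_le_mul_of_nonneg_left (hb σ) (abs_nonneg _)
    _ = c * (|(x σ : ℝ)| * (1 + (diamS S σ : ℝ))) := by push_cast; ring

/-- The recursively defined homotopy. -/
noncomputable def hrec (φ : ∀ i : ℕ, ((Fin (i + 1) → G) →₀ ℤ) →+ ((Fin (i + 1) → G) →₀ ℤ)) :
    ∀ i : ℕ, ((Fin (i + 1) → G) →₀ ℤ) →+ ((Fin (i + 2) → G) →₀ ℤ)
  | 0 => extH fun τ => cone 0 (φ 0 (Finsupp.single τ 1) - Finsupp.single τ 1)
  | (i + 1) => extH fun τ => cone (i + 1)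
      (φ (i + 1) (Finsupp.single τ 1) - Finsupp.single τ 1 -
        hrec φ i (del G i (Finsupp.single τ 1)))

lemma hrec_zero (φ : ∀ i : ℕ, ((Fin (i + 1) → G) →₀ ℤ) →+ ((Fin (i + 1) → G) →₀ ℤ)) :
    hrec φ 0 = extH fun τ => cone 0 (φ 0 (Finsupp.single τ 1) - Finsupp.single τ 1) := rfl

lemma hrec_succ (φ : ∀ i : ℕ, ((Fin (i + 1) → G) →₀ ℤ) →+ ((Fin (i + 1) → G) →₀ ℤ)) (i : ℕ) :
    hrec φ (i + 1) = extH fun τ => cone (i + 1)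
      (φ (i + 1) (Finsupp.single τ 1) - Finsupp.single τ 1 -
        hrec φ i (del G i (Finsupp.single τ 1))) := rfl

lemma hrec_equiv (φ : ∀ i : ℕ, ((Fin (i + 1) → G) →₀ ℤ) →+ ((Fin (i + 1) → G) →₀ ℤ))
    (i : ℕ) (g : G) (x : (Fin (i + 1) → G) →₀ ℤ) :
    hrec φ i (gAct g x) = gAct g (hrec φ i x) := by
  cases i with
  | zero => rw [hrec_zero]; exact extH_equiv _ g x
  | succ j => rw [hrec_succ]; exact extH_equiv _ g x

end Group
end BBH

namespace BBH
section Group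
variable {G : Type*} [Group G]

/-- Lower correction operator: `dlow 0 = 0`, `dlow (i+1) = h_i ∘ d`. -/
noncomputable def dlow (φ : ∀ i : ℕ, ((Fin (i + 1) → G) →₀ ℤ) →+ ((Fin (i + 1) → G) →₀ ℤ)) :
    ∀ i : ℕ, ((Fin (i + 1) → G) →₀ ℤ) →+ ((Fin (i + 1) → G) →₀ ℤ)
  | 0 => 0
  | (i + 1) => (hrec φ i).comp (del G i)

lemma dlow_zero_apply (φ : ∀ i : ℕ, ((Fin (i + 1) → G) →₀ ℤ) →+ ((Fin (i + 1) → G) →₀ ℤ))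
    (x : (Fin 1 → G) →₀ ℤ) : dlow φ 0 x = 0 := rfl

lemma dlow_succ_apply (φ : ∀ i : ℕ, ((Fin (i + 1) → G) →₀ ℤ) →+ ((Fin (i + 1) → G) →₀ ℤ))
    (i : ℕ) (x : (Fin (i + 2) → G) →₀ ℤ) :
    dlow φ (i + 1) x = hrec φ i (del G i x) := rfl

lemma dlow_del (φ : ∀ i : ℕ, ((Fin (i + 1) → G) →₀ ℤ) →+ ((Fin (i + 1) → G) →₀ ℤ))
    (i : ℕ) (x : (Fin (i + 2) → G) →₀ ℤ) : dlow φ i (del G i x) = 0 := by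
  cases i with
  | zero => rfl
  | succ j =>
    show hrec φ j (del G j (del G (j + 1) x)) = 0
    rw [del_del]
    exact map_zero _

end Group
end BBH


open BBH

/-- Let `G` be a finitely generated group with a word metric and
`n ≥ 1`.  If `φ_i : C_i(G) → C_i(G)` (`0 ≤ i ≤ n`) are `ℤG`-equivariant maps
commuting with the differential, bounded from the Sobolev norm to the ℓ¹-norm, and
inducing the identity on the 0-th homology (i.e. preserving the augmentation), then
there are `ℤG`-equivariant maps `h_i : C_i(G) → C_{i+1}(G)` (`0 ≤ i ≤ n`), bounded
from the Sobolev norm to the ℓ¹-norm, with `d h_i + h_{i-1} d = φ_i − id`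
(interpreting `h_{-1} d = 0`). -/
theorem basic_bounded_homotopy {G : Type*} [Group G] (S : Set G) (hS : S.Finite)
    (hgen : Subgroup.closure S = ⊤) (n : ℕ) (hn : 1 ≤ n)
    (φ : ∀ i : ℕ, ((Fin (i + 1) → G) →₀ ℤ) →+ ((Fin (i + 1) → G) →₀ ℤ))
    (hequiv : ∀ i ≤ n, ∀ (g : G) (x : (Fin (i + 1) → G) →₀ ℤ),
      φ i (gAct g x) = gAct g (φ i x))
    (hbdd : ∀ i ≤ n, ∃ c : ℝ, 0 ≤ c ∧ ∀ x : (Fin (i + 1) → G) →₀ ℤ,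
      l1 (φ i x) ≤ c * sob S x)
    (hchain : ∀ i : ℕ, i + 1 ≤ n → ∀ x : (Fin (i + 2) → G) →₀ ℤ,
      del G i (φ (i + 1) x) = φ i (del G i x))
    (hH0 : ∀ x : (Fin 1 → G) →₀ ℤ, aug G (φ 0 x) = aug G x) :
    ∃ h : ∀ i : ℕ, ((Fin (i + 1) → G) →₀ ℤ) →+ ((Fin (i + 2) → G) →₀ ℤ),
      (∀ i ≤ n, ∀ (g : G) (x : (Fin (i + 1) → G) →₀ ℤ),
        h i (gAct g x) = gAct g (h i x)) ∧
      (∀ i ≤ n, ∃ c : ℝ, 0 ≤ c ∧ ∀ x : (Fin (i + 1) → G) →₀ ℤ,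
        l1 (h i x) ≤ c * sob S x) ∧
      (∀ x : (Fin 1 → G) →₀ ℤ, del G 0 (h 0 x) = φ 0 x - x) ∧
      (∀ i : ℕ, i + 1 ≤ n → ∀ x : (Fin (i + 2) → G) →₀ ℤ,
        del G (i + 1) (h (i + 1) x) + h i (del G i x) = φ (i + 1) x - x) := by

  classical
  -- the homotopy identities, in uniform form
  have key : ∀ i, i ≤ n → ∀ x : (Fin (i + 1) → G) →₀ ℤ,
      del G i (hrec φ i x) = φ i x - x - dlow φ i x := by
    intro i
    induction i with
    | zero =>
      intro _
      have hhom : (del G 0).comp (hrec φ 0) = φ 0 - AddMonoidHom.id _ := by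
        refine addHom_ext_one fun σ => ?_
        simp only [AddMonoidHom.comp_apply, AddMonoidHom.sub_apply, AddMonoidHom.id_apply]
        rw [hrec_zero, extH_single, del_gAct, del_cone_zero]
        have haug : aug G (φ 0 (Finsupp.single (fun j => (σ 0)⁻¹ * σ j) 1) -
            Finsupp.single (fun j => (σ 0)⁻¹ * σ j) 1) = 0 := by
          rw [aug_eq, map_sub, ← aug_eq, ← aug_eq, hH0, sub_self]
        rw [haug, zero_smul, sub_zero, gAct_eq, map_sub, ← gAct_eq, ← gAct_eq,
          ← hequiv 0 (Nat.zero_le n) (σ 0), single_canon]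
      intro x
      rw [dlow_zero_apply, sub_zero]
      exact DFunLike.congr_fun hhom x
    | succ i ih =>
      intro hle
      have hi_le : i ≤ n := Nat.le_of_succ_le hle
      have hPi := ih hi_le
      have hhom : (del G (i + 1)).comp (hrec φ (i + 1)) =
          φ (i + 1) - AddMonoidHom.id _ - dlow φ (i + 1) := by
        refine addHom_ext_one fun σ => ?_
        simp only [AddMonoidHom.comp_apply, AddMonoidHom.sub_apply, AddMonoidHom.id_apply]
        rw [hrec_succ, extH_single, del_gAct, del_cone_succ]
        have hw : del G i
            (φ (i + 1) (Finsupp.single (fun j => (σ 0)⁻¹ * σ j) 1) -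
              Finsupp.single (fun j => (σ 0)⁻¹ * σ j) 1 -
              hrec φ i (del G i (Finsupp.single (fun j => (σ 0)⁻¹ * σ j) 1))) = 0 := by
          rw [map_sub, map_sub, hchain i hle,
            hPi (del G i (Finsupp.single (fun j => (σ 0)⁻¹ * σ j) 1)), dlow_del]
          abel
        rw [hw, map_zero, sub_zero, dlow_succ_apply, gAct_eq, map_sub, map_sub,
          ← gAct_eq, ← gAct_eq, ← gAct_eq, ← hrec_equiv φ i (σ 0), ← del_gAct,
          ← hequiv (i + 1) hle (σ 0), single_canon]
      intro x
      have := DFunLike.congr_fun hhom x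
      simpa using this
  refine ⟨hrec φ, fun i _ => hrec_equiv φ i, ?_, ?_, ?_⟩
  · -- boundedness
    intro i
    induction i with
    | zero =>
      intro _
      obtain ⟨c0, hc0, hb0⟩ := hbdd 0 (Nat.zero_le n)
      refine ⟨c0 + 1, by positivity, ?_⟩
      refine l1_bound_of_single (hrec φ 0) (fun σ => ?_)
      rw [hrec_zero, extH_single, l1_gAct, l1_cone]
      have hd : ((diamS S (fun j => (σ 0)⁻¹ * σ j) : ℕ) : ℝ) = (diamS S σ : ℝ) := by
        rw [diamS_smul]
      have h1 : l1 (φ 0 (Finsupp.single (fun j => (σ 0)⁻¹ * σ j) 1)) ≤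
          c0 * (1 + (diamS S σ : ℝ)) := by
        have := hb0 (Finsupp.single (fun j => (σ 0)⁻¹ * σ j) 1)
        rwa [sob_single_eq, hd] at this
      have h2 : l1 (Finsupp.single (fun j => (σ 0)⁻¹ * σ j) (1 : ℤ)) ≤ 1 := by
        simpa using l1_single_le (fun j => (σ 0)⁻¹ * σ j) (1 : ℤ)
      have h3 : (0 : ℝ) ≤ (diamS S σ : ℝ) := Nat.cast_nonneg _
      refine (l1_sub_le _ _).trans ?_
      nlinarith
    | succ i ih =>
      intro hle
      have hi_le : i ≤ n := Nat.le_of_succ_le hle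
      obtain ⟨cφ, hcφ, hbφ⟩ := hbdd (i + 1) hle
      obtain ⟨ci, hci, hbi⟩ := ih hi_le
      refine ⟨cφ + 1 + ci * (i + 2), by positivity, ?_⟩
      refine l1_bound_of_single (hrec φ (i + 1)) (fun σ => ?_)
      rw [hrec_succ, extH_single, l1_gAct, l1_cone]
      have hd : ((diamS S (fun j => (σ 0)⁻¹ * σ j) : ℕ) : ℝ) = (diamS S σ : ℝ) := by
        rw [diamS_smul]
      have h1 : l1 (φ (i + 1) (Finsupp.single (fun j => (σ 0)⁻¹ * σ j) 1)) ≤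
          cφ * (1 + (diamS S σ : ℝ)) := by
        have := hbφ (Finsupp.single (fun j => (σ 0)⁻¹ * σ j) 1)
        rwa [sob_single_eq, hd] at this
      have h2 : l1 (Finsupp.single (fun j => (σ 0)⁻¹ * σ j) (1 : ℤ)) ≤ 1 := by
        simpa using l1_single_le (fun j => (σ 0)⁻¹ * σ j) (1 : ℤ)
      have h3 : l1 (hrec φ i (del G i (Finsupp.single (fun j => (σ 0)⁻¹ * σ j) 1))) ≤
          ci * ((i + 2) * (1 + (diamS S σ : ℝ))) := by
        refine (hbi _).trans ?_
        have := sob_del_single_le (S := S) (fun j => (σ 0)⁻¹ * σ j)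
        rw [hd] at this
        exact mul_le_mul_of_nonneg_left this hci
      have h4 : (0 : ℝ) ≤ (diamS S σ : ℝ) := Nat.cast_nonneg _
      refine ((l1_sub_le _ _).trans (add_le_add_left (l1_sub_le _ _) _)).trans ?_
      push_cast
      nlinarith
  · -- degree 0 identity
    intro x
    have := key 0 (Nat.zero_le n) x
    rwa [dlow_zero_apply, sub_zero] at this
  · -- higher identities
    intro i hle x
    have := key (i + 1) hle x
    rw [dlow_succ_apply] at this
    rw [this]
    abel
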